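/- Let E be a vector lattice such that the canonical embedding Q_E : E → E^~~ is a lattice embedding and Q_E(E) is order dense in E^~~. If E is b-Dedekind complete and every order bounded linear functional on E is order continuous (E^~ = E_n^~), then E is perfect, i.e. the canonical map from E into (E_n^~)_n^~ is a lattice isomorphism onto (E_n^~)_n^~. -/

import Mathlib

open Set

noncomputable section

/-- A subset of a type with an order is order bounded. -/
def OrdBdd {V : Type*} [LE V] (S : Set V) : Prop :=
  ∃ a b : V, ∀ x ∈ S, a ≤ x ∧ x ≤ b

variable (V : Type*) [AddCommGroup V] [Module ℝ V] [Preorder V]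

/-- The order dual `V^~` of an ordered vector space `V`: the submodule of those linear
functionals mapping order bounded sets to (order) bounded sets. -/
def obDual : Submodule ℝ (V →ₗ[ℝ] ℝ) where
  carrier := {f | ∀ S : Set V, OrdBdd S → OrdBdd (f '' S)}
  zero_mem' := by
    intro S _
    exact ⟨0, 0, by rintro _ ⟨x, hx, rfl⟩; simp⟩
  add_mem' := by
    intro f g hf hg S hS
    obtain ⟨a, b, hab⟩ := hf S hS
    obtain ⟨c, d, hcd⟩ := hg S hS
    refine ⟨a + c, b + d, ?_⟩
    rintro _ ⟨x, hx, rfl⟩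
    have h1 := hab (f x) ⟨x, hx, rfl⟩
    have h2 := hcd (g x) ⟨x, hx, rfl⟩
    simp only [LinearMap.add_apply]
    constructor <;> linarith [h1.1, h1.2, h2.1, h2.2]
  smul_mem' := by
    intro c f hf S hS
    obtain ⟨a, b, hab⟩ := hf S hS
    refine ⟨-(|c| * max |a| |b|), |c| * max |a| |b|, ?_⟩
    rintro _ ⟨x, hx, rfl⟩
    obtain ⟨h1a, h1b⟩ := hab (f x) ⟨x, hx, rfl⟩
    have hfx : |f x| ≤ max |a| |b| := by
      refine abs_le.2 ⟨?_, ?_⟩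
      · have h := neg_abs_le a
        have h' := le_max_left |a| |b|
        linarith
      · have h := le_abs_self b
        have h' := le_max_right |a| |b|
        linarith
    have habs : |(c • f) x| ≤ |c| * max |a| |b| := by
      simp only [LinearMap.smul_apply, smul_eq_mul, abs_mul]
      exact mul_le_mul_of_nonneg_left hfx (abs_nonneg c)
    exact abs_le.1 habs

/-- The order on the order dual: `f ≤ g` iff `f x ≤ g x` for every `0 ≤ x`. -/
instance obDualPreorder : Preorder ↥(obDual V) where
  le f g := ∀ x : V, 0 ≤ x → (f : V →ₗ[ℝ] ℝ) x ≤ (g : V →ₗ[ℝ] ℝ) x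
  le_refl f x _ := le_rfl
  le_trans f g h h1 h2 x hx := (h1 x hx).trans (h2 x hx)

/-- The order bidual `V^~~` of `V`. -/
abbrev Bidual := ↥(obDual ↥(obDual V))

variable {V}

/-- Evaluation at `x` as a linear functional on the order dual. -/
def evalMap (x : V) : ↥(obDual V) →ₗ[ℝ] ℝ where
  toFun f := (f : V →ₗ[ℝ] ℝ) x
  map_add' f g := by simp
  map_smul' c f := by simp

instance obDualAddCommGroup : AddCommGroup ↥(obDual V) := Submodule.addCommGroup _

variable (E : Type*) [AddCommGroup E] [Module ℝ E] [Lattice E]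
  [CovariantClass E E (· + ·) (· ≤ ·)]

/-- The canonical evaluation map `Q_E : E → E^~~`. -/
def QE (x : E) : Bidual E :=
  ⟨evalMap x, by
    intro S hS
    obtain ⟨φ, ψ, h⟩ := hS
    refine ⟨(φ : E →ₗ[ℝ] ℝ) (x ⊔ 0) - (ψ : E →ₗ[ℝ] ℝ) (-x ⊔ 0),
            (ψ : E →ₗ[ℝ] ℝ) (x ⊔ 0) - (φ : E →ₗ[ℝ] ℝ) (-x ⊔ 0), ?_⟩
    rintro _ ⟨f, hf, rfl⟩
    obtain ⟨hφf, hfψ⟩ := h f hf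
    have hx1 : (0 : E) ≤ x ⊔ 0 := le_sup_right
    have hx2 : (0 : E) ≤ -x ⊔ 0 := le_sup_right
    have hdecomp : (f : E →ₗ[ℝ] ℝ) x
        = (f : E →ₗ[ℝ] ℝ) (x ⊔ 0) - (f : E →ₗ[ℝ] ℝ) (-x ⊔ 0) := by
      rw [← map_sub]
      congr 1
      have := posPart_sub_negPart x
      simpa [posPart, negPart] using this.symm
    have h1 := hφf _ hx1
    have h2 := hfψ _ hx1
    have h3 := hφf _ hx2
    have h4 := hfψ _ hx2
    have hev : evalMap x f = (f : E →ₗ[ℝ] ℝ) x := rfl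
    rw [hev, hdecomp]
    exact ⟨by linarith, by linarith⟩⟩

/-- `A ⊆ E` is `b`-order bounded: its canonical image in `E^~~` is order bounded. -/
def BOrdBddSet (A : Set E) : Prop := OrdBdd (QE E '' A)

/-- `Q_E` is an (injective) lattice embedding of `E` into `E^~~`. -/
def QLatticeEmbedding : Prop :=
  Function.Injective (QE E) ∧ (∀ x y : E, x ≤ y ↔ QE E x ≤ QE E y) ∧
    ∀ x y : E, IsLUB {QE E x, QE E y} (QE E (x ⊔ y))

/-- `E` is `b`-Dedekind complete: every nonempty subset of `E` bounded above by an element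
of `E^~~` has a supremum in `E`. -/
def BDedekindComplete : Prop :=
  ∀ S : Set E, S.Nonempty → (∃ φ : Bidual E, ∀ a ∈ S, QE E a ≤ φ) → ∃ s : E, IsLUB S s

variable {E}

/-- The net `x` in `E` is `b`-order convergent to `a`: some net in `E^~~` with the same
index set decreases to `0` in `E^~~` and dominates `|x i - a|` (canonically embedded). -/
def BOConv {ι : Type*} [Preorder ι] (x : ι → E) (a : E) : Prop :=
  ∃ y : ι → Bidual E, Antitone y ∧ IsGLB (Set.range y) 0 ∧ ∀ i, QE E (|x i - a|) ≤ y i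

/-- `x_α ↓_b 0` : the net `x` is decreasing and `inf_α x_α = 0` holds in `E^~~`. -/
def DownB0 {ι : Type*} [Preorder ι] (x : ι → E) : Prop :=
  Antitone x ∧ IsGLB (Set.range fun i => QE E (x i)) 0

section Operators

variable {G : Type*} [AddCommGroup G] [Module ℝ G] [Lattice G]
  [CovariantClass G G (· + ·) (· ≤ ·)]

/-- `T` is an order bounded operator. -/
def OrderBddOp (T : E →ₗ[ℝ] G) : Prop := ∀ A : Set E, OrdBdd A → OrdBdd (T '' A)

/-- `T` is a `b`-order bounded operator: it maps `b`-order bounded sets to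
`b`-order bounded sets. -/
def BOrdBddOp (T : E →ₗ[ℝ] G) : Prop := ∀ A : Set E, BOrdBddSet E A → BOrdBddSet G (T '' A)

/-- `T` is `b`-order continuous: `x_α →bo 0` in `E` implies `T x_α →bo 0` in `G`. -/
def BOCont (T : E →ₗ[ℝ] G) : Prop :=
  ∀ (ι : Type*) [Preorder ι] [Nonempty ι] [IsDirected ι (· ≤ ·)] (x : ι → E),
    BOConv x 0 → BOConv (fun i => T (x i)) 0

end Operators

universe u v

/-- `f ∈ E^~` is order continuous: `x_α ↓ 0` in `E` implies `inf_α |f(x_α)| = 0`. -/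
def OContFunctional {E : Type u} [AddCommGroup E] [Module ℝ E] [Lattice E]
    (f : ↥(obDual E)) : Prop :=
  ∀ (ι : Type v) [Preorder ι] [Nonempty ι] [IsDirected ι (· ≤ ·)] (x : ι → E),
    Antitone x → IsGLB (Set.range x) 0 →
    IsGLB (Set.range fun i => |(f : E →ₗ[ℝ] ℝ) (x i)|) 0

/-- `E_n^~`, the set of order continuous order bounded functionals on `E`. -/
def EnSet (E : Type u) [AddCommGroup E] [Module ℝ E] [Lattice E] : Set ↥(obDual E) :=
  {f | OContFunctional.{u, v} f}

/-- The zero functional, as an element of `E_n^~`. -/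
def zeroEn (E : Type u) [AddCommGroup E] [Module ℝ E] [Lattice E] : ↥(EnSet.{u, v} E) :=
  ⟨0, by
    intro ι _ _ _ x _ _
    have hz : (fun i => |((0 : ↥(obDual E)) : E →ₗ[ℝ] ℝ) (x i)|) = fun _ : ι => (0 : ℝ) := by
      funext i; simp
    rw [hz, Set.range_const]
    exact isGLB_singleton⟩

/-- A function `φ : E_n^~ → ℝ` is an element of `(E_n^~)_n^~`: it is linear (expressed via
the coercion to `E^~`), order bounded, and order continuous on `E_n^~`. -/
def IsEnBidualFunctional (E : Type u) [AddCommGroup E] [Module ℝ E] [Lattice E]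
    (φ : ↥(EnSet.{u, v} E) → ℝ) : Prop :=
  (∀ f g h : ↥(EnSet.{u, v} E),
      (h : ↥(obDual E)) = (f : ↥(obDual E)) + (g : ↥(obDual E)) → φ h = φ f + φ g) ∧
  (∀ (c : ℝ) (f g : ↥(EnSet.{u, v} E)),
      (g : ↥(obDual E)) = c • (f : ↥(obDual E)) → φ g = c * φ f) ∧
  (∀ S : Set ↥(EnSet.{u, v} E), OrdBdd S → OrdBdd (φ '' S)) ∧
  (∀ (ι : Type v) [Preorder ι] [Nonempty ι] [IsDirected ι (· ≤ ·)]
      (x : ι → ↥(EnSet.{u, v} E)),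
      Antitone x → IsGLB (Set.range x) (zeroEn.{u, v} E) →
      IsGLB (Set.range fun i => |φ (x i)|) 0)

/-- The collection `(E_n^~)_n^~`. -/
def EnBidualSet (E : Type u) [AddCommGroup E] [Module ℝ E] [Lattice E] :
    Set (↥(EnSet.{u, v} E) → ℝ) :=
  {φ | IsEnBidualFunctional.{u, v} E φ}

/-- The canonical evaluation map `E → (E_n^~)_n^~`. -/
def evalN (E : Type u) [AddCommGroup E] [Module ℝ E] [Lattice E]
    (x : E) : ↥(EnSet.{u, v} E) → ℝ :=
  fun f => ((f : ↥(obDual E)) : E →ₗ[ℝ] ℝ) x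

section PerfectAux

set_option linter.unusedSectionVars false


lemma ordBdd_bddAbove {S : Set ℝ} (h : OrdBdd S) : BddAbove S := by
  obtain ⟨a, b, hab⟩ := h; exact ⟨b, fun x hx => (hab x hx).2⟩

lemma ordBdd_bddBelow {S : Set ℝ} (h : OrdBdd S) : BddBelow S := by
  obtain ⟨a, b, hab⟩ := h; exact ⟨a, fun x hx => (hab x hx).1⟩

lemma mySSupMul (c : ℝ) (hc : 0 < c) (S : Set ℝ) (hS : S.Nonempty) (hSb : BddAbove S) :
    sSup ((fun s => c * s) '' S) = c * sSup S := by
  apply le_antisymm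
  · apply csSup_le (hS.image _)
    rintro _ ⟨s, hs, rfl⟩
    exact mul_le_mul_of_nonneg_left (le_csSup hSb hs) hc.le
  · obtain ⟨M, hM⟩ := hSb
    have hTb : BddAbove ((fun s => c * s) '' S) := by
      refine ⟨c * M, ?_⟩
      rintro _ ⟨s, hs, rfl⟩
      exact mul_le_mul_of_nonneg_left (hM hs) hc.le
    rw [mul_comm, ← le_div_iff₀ hc]
    apply csSup_le hS
    intro s hs
    rw [le_div_iff₀ hc, mul_comm]
    exact le_csSup hTb ⟨s, hs, rfl⟩

section Generic

variable {V : Type*} [AddCommGroup V] [Module ℝ V] [Preorder V]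

lemma extendConeFun (dec : ∀ v : V, ∃ a b : V, 0 ≤ a ∧ 0 ≤ b ∧ v = a - b)
    (hadd0 : ∀ a b : V, 0 ≤ a → 0 ≤ b → 0 ≤ a + b)
    (hsm0 : ∀ (c : ℝ) (a : V), 0 < c → 0 ≤ a → 0 ≤ c • a)
    (p0 : V → ℝ)
    (padd : ∀ a b : V, 0 ≤ a → 0 ≤ b → p0 (a + b) = p0 a + p0 b)
    (psmul : ∀ (c : ℝ) (a : V), 0 < c → 0 ≤ a → p0 (c • a) = c * p0 a) :
    ∃ L : V →ₗ[ℝ] ℝ, ∀ a b : V, 0 ≤ a → 0 ≤ b → L (a - b) = p0 a - p0 b := by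
  choose A B hA hB hAB using dec
  have key : ∀ (v a b : V), 0 ≤ a → 0 ≤ b → v = a - b →
      p0 (A v) - p0 (B v) = p0 a - p0 b := by
    intro v a b ha hb hv
    have h1 : a - b = A v - B v := by rw [← hv]; exact hAB v
    have h2 : a + B v = A v + b := sub_eq_sub_iff_add_eq_add.mp h1
    have h3 : p0 (a + B v) = p0 (A v + b) := by rw [h2]
    rw [padd a (B v) ha (hB v), padd (A v) b (hA v) hb] at h3
    linarith
  refine ⟨{ toFun := fun v => p0 (A v) - p0 (B v), map_add' := ?_, map_smul' := ?_ }, ?_⟩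
  · intro v w
    have hd : v + w = (A v + A w) - (B v + B w) := by
      rw (occs := .pos [1]) [hAB v]
      rw (occs := .pos [1]) [hAB w]
      abel
    have h := key (v + w) (A v + A w) (B v + B w)
      (hadd0 _ _ (hA v) (hA w)) (hadd0 _ _ (hB v) (hB w)) hd
    rw [padd _ _ (hA v) (hA w), padd _ _ (hB v) (hB w)] at h
    show p0 (A (v + w)) - p0 (B (v + w))
        = (p0 (A v) - p0 (B v)) + (p0 (A w) - p0 (B w))
    linarith
  · intro c v
    simp only [RingHom.id_apply, smul_eq_mul]
    show p0 (A (c • v)) - p0 (B (c • v)) = c * (p0 (A v) - p0 (B v))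
    rcases lt_trichotomy c 0 with hc | hc | hc
    · have hd : c • v = ((-c) • B v) - ((-c) • A v) := by
        rw (occs := .pos [1]) [hAB v]
        rw [smul_sub, neg_smul, neg_smul]
        abel
      have h := key (c • v) _ _ (hsm0 _ _ (by linarith) (hB v))
        (hsm0 _ _ (by linarith) (hA v)) hd
      rw [psmul _ _ (by linarith) (hB v), psmul _ _ (by linarith) (hA v)] at h
      linarith [h]
    · subst hc
      have hd : (0 : ℝ) • v = (0 : V) - 0 := by simp
      have h := key ((0 : ℝ) • v) 0 0 le_rfl le_rfl hd
      simp only [sub_self] at h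
      rw [h]; ring
    · have hd : c • v = (c • A v) - (c • B v) := by
        rw (occs := .pos [1]) [hAB v]
        rw [smul_sub]
      have h := key (c • v) _ _ (hsm0 _ _ hc (hA v)) (hsm0 _ _ hc (hB v)) hd
      rw [psmul _ _ hc (hA v), psmul _ _ hc (hB v)] at h
      linarith [h]
  · intro a b ha hb
    exact key (a - b) a b ha hb rfl

lemma genericPosPart
    (hadd : ∀ a b c d : V, a ≤ b → c ≤ d → a + c ≤ b + d)
    (hsmul : ∀ (c : ℝ) (a b : V), 0 ≤ c → a ≤ b → c • a ≤ c • b)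
    (dec : ∀ v : V, ∃ a b : V, 0 ≤ a ∧ 0 ≤ b ∧ v = a - b)
    (riesz : ∀ u x y : V, 0 ≤ x → 0 ≤ y → 0 ≤ u → u ≤ x + y →
      ∃ u1 u2 : V, 0 ≤ u1 ∧ u1 ≤ x ∧ 0 ≤ u2 ∧ u2 ≤ y ∧ u = u1 + u2)
    (F : V →ₗ[ℝ] ℝ) (hF : ∀ S : Set V, OrdBdd S → OrdBdd (F '' S)) :
    ∃ P : V →ₗ[ℝ] ℝ,
      (∀ v : V, 0 ≤ v → P v = sSup (F '' {u : V | 0 ≤ u ∧ u ≤ v})) ∧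
      (∀ S : Set V, OrdBdd S → OrdBdd (P '' S)) ∧
      (∀ v : V, 0 ≤ v → 0 ≤ P v) ∧ (∀ v : V, 0 ≤ v → F v ≤ P v) := by
  set p0 : V → ℝ := fun v => sSup (F '' {u : V | 0 ≤ u ∧ u ≤ v}) with hp0
  have hadd0 : ∀ a b : V, 0 ≤ a → 0 ≤ b → 0 ≤ a + b := fun a b ha hb => by
    simpa using hadd 0 a 0 b ha hb
  have hsm0 : ∀ (c : ℝ) (a : V), 0 < c → 0 ≤ a → 0 ≤ c • a := fun c a hc ha => by
    simpa using hsmul c 0 a hc.le ha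
  have hsub0 : ∀ a b : V, a ≤ b → 0 ≤ b - a := fun a b h => by
    have := hadd a b (-a) (-a) h le_rfl
    simpa [← sub_eq_add_neg] using this
  have hne : ∀ v : V, 0 ≤ v → (F '' {u : V | 0 ≤ u ∧ u ≤ v}).Nonempty :=
    fun v hv => ⟨F 0, 0, ⟨le_rfl, hv⟩, rfl⟩
  have hbdd : ∀ v : V, 0 ≤ v → BddAbove (F '' {u : V | 0 ≤ u ∧ u ≤ v}) :=
    fun v _ => ordBdd_bddAbove (hF _ ⟨0, v, fun u hu => hu⟩)
  have hmem_le : ∀ v : V, 0 ≤ v → ∀ u : V, 0 ≤ u → u ≤ v → F u ≤ p0 v :=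
    fun v hv u hu huv => le_csSup (hbdd v hv) ⟨u, ⟨hu, huv⟩, rfl⟩
  have padd : ∀ a b : V, 0 ≤ a → 0 ≤ b → p0 (a + b) = p0 a + p0 b := by
    intro a b ha hb
    apply le_antisymm
    · apply csSup_le (hne _ (hadd0 a b ha hb))
      rintro _ ⟨u, ⟨hu0, hu⟩, rfl⟩
      obtain ⟨u1, u2, h1, h2, h3, h4, h5⟩ := riesz u a b ha hb hu0 hu
      rw [h5, map_add]
      exact add_le_add (hmem_le a ha u1 h1 h2) (hmem_le b hb u2 h3 h4)
    · have H : ∀ r ∈ F '' {u : V | 0 ≤ u ∧ u ≤ a}, ∀ s ∈ F '' {u : V | 0 ≤ u ∧ u ≤ b},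
          r + s ≤ p0 (a + b) := by
        rintro _ ⟨u1, ⟨h10, h1a⟩, rfl⟩ _ ⟨u2, ⟨h20, h2b⟩, rfl⟩
        rw [← map_add]
        exact hmem_le _ (hadd0 a b ha hb) _ (hadd0 _ _ h10 h20) (hadd _ _ _ _ h1a h2b)
      have h1 : p0 a ≤ p0 (a + b) - p0 b := by
        apply csSup_le (hne a ha)
        intro r hr
        rw [le_sub_iff_add_le]
        have h2 : p0 b ≤ p0 (a + b) - r := by
          apply csSup_le (hne b hb)
          intro s hs
          linarith [H r hr s hs]
        linarith
      linarith
  have psmul : ∀ (c : ℝ) (a : V), 0 < c → 0 ≤ a → p0 (c • a) = c * p0 a := by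
    intro c a hc ha
    have hset : F '' {u : V | 0 ≤ u ∧ u ≤ c • a}
        = (fun s => c * s) '' (F '' {u : V | 0 ≤ u ∧ u ≤ a}) := by
      ext r
      constructor
      · rintro ⟨u, ⟨hu0, hu⟩, rfl⟩
        refine ⟨F (c⁻¹ • u), ⟨c⁻¹ • u, ⟨?_, ?_⟩, rfl⟩, ?_⟩
        · simpa using hsmul c⁻¹ 0 u (by positivity) hu0
        · have h := hsmul c⁻¹ u (c • a) (by positivity) hu
          rwa [inv_smul_smul₀ hc.ne'] at h
        · show c * F (c⁻¹ • u) = F u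
          rw [← smul_eq_mul, ← map_smul, smul_smul, mul_inv_cancel₀ hc.ne', one_smul]
      · rintro ⟨_, ⟨u, ⟨hu0, hu⟩, rfl⟩, rfl⟩
        refine ⟨c • u, ⟨hsm0 c u hc hu0, hsmul c u a hc.le hu⟩, ?_⟩
        show F (c • u) = c * F u
        rw [map_smul, smul_eq_mul]
    show sSup (F '' {u : V | 0 ≤ u ∧ u ≤ c • a}) = c * sSup (F '' {u : V | 0 ≤ u ∧ u ≤ a})
    rw [hset]
    exact mySSupMul c hc _ (hne a ha) (hbdd a ha)
  obtain ⟨L, hL⟩ := extendConeFun dec hadd0 hsm0 p0 padd psmul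
  have h00 : p0 0 = 0 := by
    have := padd 0 0 le_rfl le_rfl
    simp only [add_zero] at this
    linarith
  have hformula : ∀ v : V, 0 ≤ v → L v = p0 v := by
    intro v hv
    have := hL v 0 hv le_rfl
    rw [sub_zero, h00, sub_zero] at this
    exact this
  have hpos : ∀ v : V, 0 ≤ v → 0 ≤ L v := by
    intro v hv
    rw [hformula v hv]
    have h := hmem_le v hv 0 le_rfl hv
    rwa [map_zero] at h
  refine ⟨L, hformula, ?_, hpos, ?_⟩
  · rintro S ⟨a, b, hab⟩
    refine ⟨L a, L b, ?_⟩
    rintro _ ⟨x, hx, rfl⟩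
    obtain ⟨h1, h2⟩ := hab x hx
    constructor
    · have h := hpos _ (hsub0 a x h1); rw [map_sub] at h; linarith
    · have h := hpos _ (hsub0 x b h2); rw [map_sub] at h; linarith
  · intro v hv
    rw [hformula v hv]
    exact hmem_le v hv v hv le_rfl

end Generic


section ELevel

variable {E : Type*} [AddCommGroup E] [Module ℝ E] [Lattice E]
  [CovariantClass E E (· + ·) (· ≤ ·)] [PosSMulMono ℝ E]

lemma myAddLeAdd : ∀ a b c d : E, a ≤ b → c ≤ d → a + c ≤ b + d := by
  intro a b c d h1 h2
  calc a + c ≤ a + d := add_le_add_right h2 a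
    _ = d + a := add_comm a d
    _ ≤ d + b := add_le_add_right h1 d
    _ = b + d := add_comm d b

lemma myDec : ∀ v : E, ∃ a b : E, 0 ≤ a ∧ 0 ≤ b ∧ v = a - b := fun v =>
  ⟨v⁺, v⁻, posPart_nonneg v, negPart_nonneg v, (posPart_sub_negPart v).symm⟩

lemma myRiesz : ∀ u x y : E, 0 ≤ x → 0 ≤ y → 0 ≤ u → u ≤ x + y →
    ∃ u1 u2 : E, 0 ≤ u1 ∧ u1 ≤ x ∧ 0 ≤ u2 ∧ u2 ≤ y ∧ u = u1 + u2 := by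
  intro u x y hx hy hu0 hu
  refine ⟨u ⊓ x, u - u ⊓ x, le_inf hu0 hx, inf_le_right, ?_, ?_, by abel⟩
  · have : u ⊓ x ≤ u := inf_le_left
    rwa [← sub_nonneg] at this
  · have h1 : u - u ⊓ x = 0 ⊔ (u - x) := by rw [sub_inf]; simp
    rw [h1]
    apply sup_le hy
    have : u - x ≤ (x + y) - x := by
      have := myAddLeAdd u (x + y) (-x) (-x) hu le_rfl
      simpa [← sub_eq_add_neg] using this
    simpa using this

/-- membership fact for elements of the order dual -/
lemma obDual_prop (f : ↥(obDual E)) :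
    ∀ S : Set E, OrdBdd S → OrdBdd ((f : E →ₗ[ℝ] ℝ) '' S) := f.2

lemma obDual_le_iff {f g : ↥(obDual E)} :
    f ≤ g ↔ ∀ x : E, 0 ≤ x → (f : E →ₗ[ℝ] ℝ) x ≤ (g : E →ₗ[ℝ] ℝ) x := Iff.rfl

lemma obDual_nonneg_iff {f : ↥(obDual E)} :
    0 ≤ f ↔ ∀ x : E, 0 ≤ x → 0 ≤ (f : E →ₗ[ℝ] ℝ) x := by
  rw [obDual_le_iff]
  simp

lemma posF_mono {f : ↥(obDual E)} (hf : 0 ≤ f) {x y : E} (h : x ≤ y) :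
    (f : E →ₗ[ℝ] ℝ) x ≤ (f : E →ₗ[ℝ] ℝ) y := by
  have h0 : (0 : E) ≤ y - x := by rwa [sub_nonneg]
  have h1 := obDual_nonneg_iff.mp hf (y - x) h0
  rw [map_sub] at h1
  linarith

lemma posF_abs_le {f : ↥(obDual E)} (hf : 0 ≤ f) (x : E) :
    |(f : E →ₗ[ℝ] ℝ) x| ≤ (f : E →ₗ[ℝ] ℝ) (x⁺ + x⁻) := by
  have hxp := obDual_nonneg_iff.mp hf x⁺ (posPart_nonneg x)
  have hxm := obDual_nonneg_iff.mp hf x⁻ (negPart_nonneg x)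
  have hx : (f : E →ₗ[ℝ] ℝ) x
      = (f : E →ₗ[ℝ] ℝ) x⁺ - (f : E →ₗ[ℝ] ℝ) x⁻ := by
    rw [← map_sub, posPart_sub_negPart]
  rw [map_add]
  rw [abs_le]
  constructor <;> [linarith [hx]; linarith [hx]]

/-- The Riesz–Kantorovich positive part of an order bounded functional. -/
lemma exists_obDual_posPart (f : ↥(obDual E)) :
    ∃ p : ↥(obDual E),
      (∀ x : E, 0 ≤ x →
        (p : E →ₗ[ℝ] ℝ) x = sSup ((f : E →ₗ[ℝ] ℝ) '' {u : E | 0 ≤ u ∧ u ≤ x})) ∧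
      0 ≤ p ∧ f ≤ p := by
  obtain ⟨P, h1, h2, h3, h4⟩ := genericPosPart myAddLeAdd
    (fun c a b hc h => smul_le_smul_of_nonneg_left h hc) myDec myRiesz
    (f : E →ₗ[ℝ] ℝ) (obDual_prop f)
  refine ⟨⟨P, h2⟩, h1, ?_, ?_⟩
  · rw [obDual_nonneg_iff]
    exact h3
  · rw [obDual_le_iff]
    exact h4

lemma obDual_dec : ∀ f : ↥(obDual E), ∃ a b : ↥(obDual E), 0 ≤ a ∧ 0 ≤ b ∧ f = a - b := by
  intro f
  obtain ⟨p, _, hp2, hp3⟩ := exists_obDual_posPart f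
  refine ⟨p, p - f, hp2, ?_, by abel⟩
  rw [obDual_nonneg_iff]
  intro x hx
  have := obDual_le_iff.mp hp3 x hx
  have hc : ((p - f : ↥(obDual E)) : E →ₗ[ℝ] ℝ) x
      = (p : E →ₗ[ℝ] ℝ) x - (f : E →ₗ[ℝ] ℝ) x := by
    simp [Submodule.coe_sub]
  rw [hc]
  linarith

lemma obDual_addLeAdd : ∀ a b c d : ↥(obDual E), a ≤ b → c ≤ d → a + c ≤ b + d := by
  intro a b c d h1 h2
  rw [obDual_le_iff] at *
  intro x hx
  have ha := h1 x hx
  have hc := h2 x hx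
  simp only [Submodule.coe_add, LinearMap.add_apply]
  linarith

lemma obDual_smulLe : ∀ (c : ℝ) (a b : ↥(obDual E)), 0 ≤ c → a ≤ b → c • a ≤ c • b := by
  intro c a b hc h
  rw [obDual_le_iff] at *
  intro x hx
  have := h x hx
  simp only [Submodule.coe_smul, LinearMap.smul_apply, smul_eq_mul]
  exact mul_le_mul_of_nonneg_left this hc

lemma obDual_riesz : ∀ u x y : ↥(obDual E), 0 ≤ x → 0 ≤ y → 0 ≤ u → u ≤ x + y →
    ∃ u1 u2 : ↥(obDual E), 0 ≤ u1 ∧ u1 ≤ x ∧ 0 ≤ u2 ∧ u2 ≤ y ∧ u = u1 + u2 := by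
  intro h f g hf hg hh hhfg
  obtain ⟨p, hp1, hp2, _⟩ := exists_obDual_posPart (h - g)
  have hcoe : ∀ u : E, ((h - g : ↥(obDual E)) : E →ₗ[ℝ] ℝ) u
      = (h : E →ₗ[ℝ] ℝ) u - (g : E →ₗ[ℝ] ℝ) u := by
    intro u; simp [Submodule.coe_sub]
  have hne : ∀ x : E, 0 ≤ x →
      (((h - g : ↥(obDual E)) : E →ₗ[ℝ] ℝ) '' {u : E | 0 ≤ u ∧ u ≤ x}).Nonempty :=
    fun x hx => ⟨_, 0, ⟨le_rfl, hx⟩, rfl⟩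
  have hbdd : ∀ x : E, 0 ≤ x →
      BddAbove (((h - g : ↥(obDual E)) : E →ₗ[ℝ] ℝ) '' {u : E | 0 ≤ u ∧ u ≤ x}) :=
    fun x _ => ordBdd_bddAbove (obDual_prop _ _ ⟨0, x, fun u hu => hu⟩)
  have hsum : ∀ u : E, 0 ≤ u →
      (h : E →ₗ[ℝ] ℝ) u ≤ (f : E →ₗ[ℝ] ℝ) u + (g : E →ₗ[ℝ] ℝ) u := by
    intro u hu
    have := obDual_le_iff.mp hhfg u hu
    simpa [Submodule.coe_add] using this
  refine ⟨p, h - p, hp2, ?_, ?_, ?_, by abel⟩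
  · -- p ≤ f
    rw [obDual_le_iff]
    intro x hx
    rw [hp1 x hx]
    apply csSup_le (hne x hx)
    rintro _ ⟨u, ⟨hu0, hux⟩, rfl⟩
    rw [hcoe u]
    have h1 := hsum u hu0
    have h2 := posF_mono hf hux
    linarith
  · -- 0 ≤ h - p
    rw [obDual_nonneg_iff]
    intro x hx
    have hple : (p : E →ₗ[ℝ] ℝ) x ≤ (h : E →ₗ[ℝ] ℝ) x := by
      rw [hp1 x hx]
      apply csSup_le (hne x hx)
      rintro _ ⟨u, ⟨hu0, hux⟩, rfl⟩
      rw [hcoe u]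
      have h1 := obDual_nonneg_iff.mp hg u hu0
      have h2 := posF_mono hh hux
      linarith
    have : ((h - p : ↥(obDual E)) : E →ₗ[ℝ] ℝ) x
        = (h : E →ₗ[ℝ] ℝ) x - (p : E →ₗ[ℝ] ℝ) x := by simp [Submodule.coe_sub]
    rw [this]
    linarith
  · -- h - p ≤ g
    rw [obDual_le_iff]
    intro x hx
    have hxle : (h : E →ₗ[ℝ] ℝ) x - (g : E →ₗ[ℝ] ℝ) x ≤ (p : E →ₗ[ℝ] ℝ) x := by
      rw [hp1 x hx]
      have := le_csSup (hbdd x hx) ⟨x, ⟨hx, le_rfl⟩, rfl⟩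
      rwa [hcoe x] at this
    have : ((h - p : ↥(obDual E)) : E →ₗ[ℝ] ℝ) x
        = (h : E →ₗ[ℝ] ℝ) x - (p : E →ₗ[ℝ] ℝ) x := by simp [Submodule.coe_sub]
    rw [this]
    linarith

end ELevel


section BidualLevel

variable {E : Type*} [AddCommGroup E] [Module ℝ E] [Lattice E]
  [CovariantClass E E (· + ·) (· ≤ ·)] [PosSMulMono ℝ E]

lemma bidual_prop (Φ : Bidual E) :
    ∀ S : Set ↥(obDual E), OrdBdd S → OrdBdd ((Φ : ↥(obDual E) →ₗ[ℝ] ℝ) '' S) := Φ.2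

lemma bidual_le_iff {Φ Ψ : Bidual E} :
    Φ ≤ Ψ ↔ ∀ f : ↥(obDual E), 0 ≤ f →
      (Φ : ↥(obDual E) →ₗ[ℝ] ℝ) f ≤ (Ψ : ↥(obDual E) →ₗ[ℝ] ℝ) f := Iff.rfl

lemma bidual_nonneg_iff {Φ : Bidual E} :
    0 ≤ Φ ↔ ∀ f : ↥(obDual E), 0 ≤ f → 0 ≤ (Φ : ↥(obDual E) →ₗ[ℝ] ℝ) f := by
  rw [bidual_le_iff]; simp

/-- The Riesz–Kantorovich positive part in the bidual. -/
lemma exists_bidual_posPart (Φ : Bidual E) :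
    ∃ Θ : Bidual E,
      (∀ f : ↥(obDual E), 0 ≤ f →
        (Θ : ↥(obDual E) →ₗ[ℝ] ℝ) f
          = sSup ((Φ : ↥(obDual E) →ₗ[ℝ] ℝ) '' {h : ↥(obDual E) | 0 ≤ h ∧ h ≤ f})) ∧
      0 ≤ Θ ∧ (∀ f : ↥(obDual E), 0 ≤ f →
        (Φ : ↥(obDual E) →ₗ[ℝ] ℝ) f ≤ (Θ : ↥(obDual E) →ₗ[ℝ] ℝ) f) := by
  obtain ⟨P, h1, h2, h3, h4⟩ := genericPosPart obDual_addLeAdd obDual_smulLe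
    obDual_dec obDual_riesz (Φ : ↥(obDual E) →ₗ[ℝ] ℝ) (bidual_prop Φ)
  exact ⟨⟨P, h2⟩, h1, bidual_nonneg_iff.mpr h3, h4⟩

lemma QE_coe_apply (x : E) (f : ↥(obDual E)) :
    ((QE E x : Bidual E) : ↥(obDual E) →ₗ[ℝ] ℝ) f = (f : E →ₗ[ℝ] ℝ) x := rfl

lemma QE_add (x y : E) : QE E (x + y) = QE E x + QE E y := by
  apply Subtype.ext
  apply LinearMap.ext
  intro f
  have : ((QE E x + QE E y : Bidual E) : ↥(obDual E) →ₗ[ℝ] ℝ) f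
      = (f : E →ₗ[ℝ] ℝ) x + (f : E →ₗ[ℝ] ℝ) y := by
    simp [Submodule.coe_add, QE_coe_apply]
  rw [this]
  show (f : E →ₗ[ℝ] ℝ) (x + y) = _
  rw [map_add]

lemma QE_sub (x y : E) : QE E (x - y) = QE E x - QE E y := by
  apply Subtype.ext
  apply LinearMap.ext
  intro f
  have : ((QE E x - QE E y : Bidual E) : ↥(obDual E) →ₗ[ℝ] ℝ) f
      = (f : E →ₗ[ℝ] ℝ) x - (f : E →ₗ[ℝ] ℝ) y := by
    simp [Submodule.coe_sub, QE_coe_apply]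
  rw [this]
  show (f : E →ₗ[ℝ] ℝ) (x - y) = _
  rw [map_sub]

lemma QE_zero : QE E (0 : E) = 0 := by
  apply Subtype.ext
  apply LinearMap.ext
  intro f
  show (f : E →ₗ[ℝ] ℝ) 0 = _
  simp

end BidualLevel

section MainLemmas

variable {E : Type*} [AddCommGroup E] [Module ℝ E] [Lattice E]
  [CovariantClass E E (· + ·) (· ≤ ·)] [PosSMulMono ℝ E]

lemma QE_le_zero_of_le {x : E} (hemb : QLatticeEmbedding E) (h : x ≤ 0) :
    QE E x ≤ 0 := by
  have := (hemb.2.1 x 0).mp h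
  rwa [QE_zero] at this

lemma zero_le_of_QE {x : E} (hemb : QLatticeEmbedding E) (h : 0 ≤ QE E x) :
    0 ≤ x := by
  apply (hemb.2.1 0 x).mpr
  rwa [QE_zero]

/-- Every positive element of the bidual is attained, under the standing hypotheses. -/
lemma exists_QE_eq_of_nonneg (hemb : QLatticeEmbedding E)
    (hdense : ∀ φ : Bidual E, 0 < φ → ∃ x : E, 0 < QE E x ∧ QE E x ≤ φ)
    (hbDC : BDedekindComplete E)
    (Ψ : Bidual E) (hΨ : 0 ≤ Ψ) : ∃ s : E, QE E s = Ψ := by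
  classical
  set D : Set E := {x : E | 0 ≤ x ∧ QE E x ≤ Ψ} with hD
  have h0D : (0 : E) ∈ D := by
    refine ⟨le_rfl, ?_⟩
    rw [QE_zero]
    exact hΨ
  obtain ⟨s, hs⟩ := hbDC D ⟨0, h0D⟩ ⟨Ψ, fun a ha => ha.2⟩
  have hs0 : 0 ≤ s := hs.1 h0D
  -- Step A : QE s ≤ Ψ
  have stepA : QE E s ≤ Ψ := by
    by_contra hne
    set Θ : Bidual E := QE E s - Ψ with hΘ
    have hΘapp : ∀ f : ↥(obDual E),
        (Θ : ↥(obDual E) →ₗ[ℝ] ℝ) f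
          = (f : E →ₗ[ℝ] ℝ) s - (Ψ : ↥(obDual E) →ₗ[ℝ] ℝ) f := by
      intro f
      rw [hΘ]
      simp [Submodule.coe_sub, QE_coe_apply]
    obtain ⟨Θp, hp1, hp2, hp3⟩ := exists_bidual_posPart Θ
    -- Θ⁺ is strictly positive
    have hpos : 0 < Θp := by
      refine lt_of_le_not_ge hp2 ?_
      intro hle
      apply hne
      rw [bidual_le_iff]
      intro f hf
      have h1 := hp3 f hf
      have h2 := bidual_le_iff.mp hle f hf
      have h3 : ((0 : Bidual E) : ↥(obDual E) →ₗ[ℝ] ℝ) f = 0 := by simp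
      rw [h3] at h2
      rw [hΘapp f] at h1
      rw [QE_coe_apply]
      linarith only [h1, h2]
    obtain ⟨x, hx1, hx2⟩ := hdense Θp hpos
    -- x ≤ s - d for every d ∈ D
    have hxd : ∀ d ∈ D, d ≤ s - x := by
      intro d hd
      have hds : d ≤ s := hs.1 hd
      have hQ : QE E x ≤ QE E (s - d) := by
        rw [bidual_le_iff]
        intro f hf
        have h1 := bidual_le_iff.mp hx2 f hf
        rw [hp1 f hf] at h1
        have hne' : ((Θ : ↥(obDual E) →ₗ[ℝ] ℝ) ''
            {h : ↥(obDual E) | 0 ≤ h ∧ h ≤ f}).Nonempty := ⟨_, 0, ⟨le_rfl, hf⟩, rfl⟩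
        have hub : sSup ((Θ : ↥(obDual E) →ₗ[ℝ] ℝ) '' {h : ↥(obDual E) | 0 ≤ h ∧ h ≤ f})
            ≤ (f : E →ₗ[ℝ] ℝ) (s - d) := by
          apply csSup_le hne'
          rintro _ ⟨h, ⟨hh0, hhf⟩, rfl⟩
          rw [hΘapp h]
          have hhd : (h : E →ₗ[ℝ] ℝ) d ≤ (Ψ : ↥(obDual E) →ₗ[ℝ] ℝ) h := by
            have := bidual_le_iff.mp hd.2 h hh0
            rwa [QE_coe_apply] at this
          have hsd0 : (0 : E) ≤ s - d := by rwa [sub_nonneg]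
          have hmono : (h : E →ₗ[ℝ] ℝ) (s - d) ≤ (f : E →ₗ[ℝ] ℝ) (s - d) := by
            have := obDual_le_iff.mp hhf (s - d) hsd0
            exact this
          have hsub : (h : E →ₗ[ℝ] ℝ) (s - d)
              = (h : E →ₗ[ℝ] ℝ) s - (h : E →ₗ[ℝ] ℝ) d := map_sub _ _ _
          linarith only [hhd, hmono, hsub]
        rw [QE_coe_apply, QE_coe_apply]
        rw [QE_coe_apply] at h1
        linarith only [h1, hub]
      have := (hemb.2.1 x (s - d)).mpr hQ
      -- x ≤ s - d ⟹ d ≤ s - x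
      have h2 := myAddLeAdd x (s - d) d d this le_rfl
      have h3 : s - d + d = s := by abel
      rw [h3] at h2
      have h4 := myAddLeAdd (x + d) s (-x) (-x) h2 le_rfl
      have h5 : x + d + -x = d := by abel
      have h6 : s + -x = s - x := by abel
      rw [h5, h6] at h4
      exact h4
    have hsle : s ≤ s - x := hs.2 hxd
    have hxle : x ≤ 0 := by
      have h2 := myAddLeAdd s (s - x) (x - s) (x - s) hsle le_rfl
      have h3 : s + (x - s) = x := by abel
      have h4 : s - x + (x - s) = 0 := by abel
      rw [h3, h4] at h2
      exact h2
    exact hx1.2 (QE_le_zero_of_le hemb hxle)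
  -- Step B : Ψ ≤ QE s
  have stepB : Ψ ≤ QE E s := by
    by_contra hne
    have hpos : 0 < Ψ - QE E s := by
      refine lt_of_le_not_ge ?_ ?_
      · rw [bidual_le_iff]
        intro f hf
        have h1 := bidual_le_iff.mp stepA f hf
        have h3 : ((0 : Bidual E) : ↥(obDual E) →ₗ[ℝ] ℝ) f = 0 := by simp
        rw [h3]
        have : ((Ψ - QE E s : Bidual E) : ↥(obDual E) →ₗ[ℝ] ℝ) f
            = (Ψ : ↥(obDual E) →ₗ[ℝ] ℝ) f - (f : E →ₗ[ℝ] ℝ) s := by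
          simp [Submodule.coe_sub, QE_coe_apply]
        rw [this]
        rw [QE_coe_apply] at h1
        linarith only [h1]
      · intro hle
        apply hne
        rw [bidual_le_iff]
        intro f hf
        have h2 := bidual_le_iff.mp hle f hf
        have h3 : ((0 : Bidual E) : ↥(obDual E) →ₗ[ℝ] ℝ) f = 0 := by simp
        rw [h3] at h2
        have : ((Ψ - QE E s : Bidual E) : ↥(obDual E) →ₗ[ℝ] ℝ) f
            = (Ψ : ↥(obDual E) →ₗ[ℝ] ℝ) f - (f : E →ₗ[ℝ] ℝ) s := by
          simp [Submodule.coe_sub, QE_coe_apply]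
        rw [this] at h2
        rw [QE_coe_apply]
        linarith only [h2]
    obtain ⟨x, hx1, hx2⟩ := hdense _ hpos
    have hx0 : 0 ≤ x := zero_le_of_QE hemb hx1.1
    have hsxD : s + x ∈ D := by
      constructor
      · calc (0 : E) ≤ s := hs0
          _ = s + 0 := (add_zero s).symm
          _ ≤ s + x := add_le_add_right hx0 s
      · rw [QE_add, bidual_le_iff]
        intro f hf
        have h2 := bidual_le_iff.mp hx2 f hf
        have : ((Ψ - QE E s : Bidual E) : ↥(obDual E) →ₗ[ℝ] ℝ) f
            = (Ψ : ↥(obDual E) →ₗ[ℝ] ℝ) f - (f : E →ₗ[ℝ] ℝ) s := by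
          simp [Submodule.coe_sub, QE_coe_apply]
        rw [this] at h2
        have h4 : ((QE E s + QE E x : Bidual E) : ↥(obDual E) →ₗ[ℝ] ℝ) f
            = (f : E →ₗ[ℝ] ℝ) s + (f : E →ₗ[ℝ] ℝ) x := by
          simp [Submodule.coe_add, QE_coe_apply]
        rw [h4]
        rw [QE_coe_apply] at h2
        linarith only [h2]
    have hsle : s + x ≤ s := hs.1 hsxD
    have hxle : x ≤ 0 := by
      have h2 := myAddLeAdd (s + x) s (-s) (-s) hsle le_rfl
      have h3 : s + x + -s = x := by abel
      have h4 : s + -s = 0 := by abel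
      rw [h3, h4] at h2
      exact h2
    exact hx1.2 (QE_le_zero_of_le hemb hxle)
  -- combine
  refine ⟨s, ?_⟩
  apply Subtype.ext
  apply LinearMap.ext
  intro f
  -- equality on positive functionals, then decompose
  have hposeq : ∀ f : ↥(obDual E), 0 ≤ f →
      (f : E →ₗ[ℝ] ℝ) s = (Ψ : ↥(obDual E) →ₗ[ℝ] ℝ) f := by
    intro f hf
    have h1 := bidual_le_iff.mp stepA f hf
    have h2 := bidual_le_iff.mp stepB f hf
    rw [QE_coe_apply] at h1 h2
    linarith
  obtain ⟨a, b, ha, hb, hab⟩ := obDual_dec f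
  have h1 := hposeq a ha
  have h2 := hposeq b hb
  have h3 : (Ψ : ↥(obDual E) →ₗ[ℝ] ℝ) f
      = (Ψ : ↥(obDual E) →ₗ[ℝ] ℝ) a - (Ψ : ↥(obDual E) →ₗ[ℝ] ℝ) b := by
    rw [hab, map_sub]
  have h4 : (f : E →ₗ[ℝ] ℝ) s = (a : E →ₗ[ℝ] ℝ) s - (b : E →ₗ[ℝ] ℝ) s := by
    rw [hab]
    simp [Submodule.coe_sub]
  show (f : E →ₗ[ℝ] ℝ) s = (Ψ : ↥(obDual E) →ₗ[ℝ] ℝ) f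
  rw [h3, h4, h1, h2]

/-- Every element of the bidual is attained. -/
lemma exists_QE_eq (hemb : QLatticeEmbedding E)
    (hdense : ∀ φ : Bidual E, 0 < φ → ∃ x : E, 0 < QE E x ∧ QE E x ≤ φ)
    (hbDC : BDedekindComplete E)
    (Φ : Bidual E) : ∃ x : E, QE E x = Φ := by
  obtain ⟨Θ, hΘ1, hΘ2, hΘ3⟩ := exists_bidual_posPart Φ
  have hneg : 0 ≤ Θ - Φ := by
    rw [bidual_nonneg_iff]
    intro f hf
    have h1 := hΘ3 f hf
    have : ((Θ - Φ : Bidual E) : ↥(obDual E) →ₗ[ℝ] ℝ) f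
        = (Θ : ↥(obDual E) →ₗ[ℝ] ℝ) f - (Φ : ↥(obDual E) →ₗ[ℝ] ℝ) f := by
      simp [Submodule.coe_sub]
    rw [this]
    linarith
  obtain ⟨s1, hs1⟩ := exists_QE_eq_of_nonneg hemb hdense hbDC Θ hΘ2
  obtain ⟨s2, hs2⟩ := exists_QE_eq_of_nonneg hemb hdense hbDC (Θ - Φ) hneg
  refine ⟨s1 - s2, ?_⟩
  rw [QE_sub, hs1, hs2]
  abel

end MainLemmas


section InfFunctional

lemma mySInfMul (c : ℝ) (hc : 0 < c) (S : Set ℝ) (hS : S.Nonempty) (hSb : BddBelow S) :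
    sInf ((fun s => c * s) '' S) = c * sInf S := by
  apply le_antisymm
  · obtain ⟨M, hM⟩ := hSb
    have hTb : BddBelow ((fun s => c * s) '' S) := by
      refine ⟨c * M, ?_⟩
      rintro _ ⟨s, hs, rfl⟩
      exact mul_le_mul_of_nonneg_left (hM hs) hc.le
    rw [mul_comm, ← div_le_iff₀ hc]
    apply le_csInf hS
    intro s hs
    rw [div_le_iff₀ hc, mul_comm]
    exact csInf_le hTb ⟨s, hs, rfl⟩
  · apply le_csInf (hS.image _)
    rintro _ ⟨s, hs, rfl⟩
    exact mul_le_mul_of_nonneg_left (csInf_le hSb hs) hc.le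

variable {E : Type*} [AddCommGroup E] [Module ℝ E] [Lattice E]
  [CovariantClass E E (· + ·) (· ≤ ·)] [PosSMulMono ℝ E]

lemma exists_inf_functional {ι : Type*} [Preorder ι] [Nonempty ι] [IsDirected ι (· ≤ ·)]
    (q : ι → ↥(obDual E)) (hanti : Antitone q) (hpos : ∀ i, 0 ≤ q i) :
    ∃ g : ↥(obDual E),
      (∀ w : E, 0 ≤ w →
        (g : E →ₗ[ℝ] ℝ) w = sInf (Set.range fun i => (q i : E →ₗ[ℝ] ℝ) w)) ∧
      (∀ i, g ≤ q i) := by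
  classical
  set p0 : E → ℝ := fun w => sInf (Set.range fun i => (q i : E →ₗ[ℝ] ℝ) w) with hp0
  have hne : ∀ w : E, (Set.range fun i => (q i : E →ₗ[ℝ] ℝ) w).Nonempty :=
    fun w => Set.range_nonempty _
  have hbdd : ∀ w : E, 0 ≤ w → BddBelow (Set.range fun i => (q i : E →ₗ[ℝ] ℝ) w) := by
    intro w hw
    refine ⟨0, ?_⟩
    rintro _ ⟨i, rfl⟩
    exact obDual_nonneg_iff.mp (hpos i) w hw
  have hle : ∀ w : E, 0 ≤ w → ∀ i, p0 w ≤ (q i : E →ₗ[ℝ] ℝ) w :=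
    fun w hw i => csInf_le (hbdd w hw) ⟨i, rfl⟩
  have hglb : ∀ w : E, 0 ≤ w → ∀ c : ℝ, (∀ i, c ≤ (q i : E →ₗ[ℝ] ℝ) w) → c ≤ p0 w := by
    intro w hw c hc
    apply le_csInf (hne w)
    rintro _ ⟨i, rfl⟩
    exact hc i
  have p0nonneg : ∀ w : E, 0 ≤ w → 0 ≤ p0 w :=
    fun w hw => hglb w hw 0 (fun i => obDual_nonneg_iff.mp (hpos i) w hw)
  have hadd00 : ∀ a b : E, 0 ≤ a → 0 ≤ b → (0 : E) ≤ a + b := by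
    intro a b ha hb
    simpa using myAddLeAdd 0 a 0 b ha hb
  have padd : ∀ a b : E, 0 ≤ a → 0 ≤ b → p0 (a + b) = p0 a + p0 b := by
    intro a b ha hb
    apply le_antisymm
    · apply le_of_forall_pos_le_add
      intro ε hε
      have h1 : ∃ i, (q i : E →ₗ[ℝ] ℝ) a < p0 a + ε / 2 := by
        have hlt : sInf (Set.range fun i => (q i : E →ₗ[ℝ] ℝ) a) < p0 a + ε / 2 := by
          have : p0 a < p0 a + ε / 2 := by linarith
          exact this
        obtain ⟨r, hr1, hr2⟩ := exists_lt_of_csInf_lt (hne a) hlt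
        obtain ⟨i, rfl⟩ := hr1
        exact ⟨i, hr2⟩
      have h2 : ∃ j, (q j : E →ₗ[ℝ] ℝ) b < p0 b + ε / 2 := by
        have hlt : sInf (Set.range fun i => (q i : E →ₗ[ℝ] ℝ) b) < p0 b + ε / 2 := by
          have : p0 b < p0 b + ε / 2 := by linarith
          exact this
        obtain ⟨r, hr1, hr2⟩ := exists_lt_of_csInf_lt (hne b) hlt
        obtain ⟨j, rfl⟩ := hr1
        exact ⟨j, hr2⟩
      obtain ⟨i, hi⟩ := h1
      obtain ⟨j, hj⟩ := h2
      obtain ⟨k, hik, hjk⟩ := exists_ge_ge i j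
      have hk1 : (q k : E →ₗ[ℝ] ℝ) a ≤ (q i : E →ₗ[ℝ] ℝ) a :=
        obDual_le_iff.mp (hanti hik) a ha
      have hk2 : (q k : E →ₗ[ℝ] ℝ) b ≤ (q j : E →ₗ[ℝ] ℝ) b :=
        obDual_le_iff.mp (hanti hjk) b hb
      have h3 : p0 (a + b) ≤ (q k : E →ₗ[ℝ] ℝ) (a + b) := hle _ (hadd00 a b ha hb) k
      rw [map_add] at h3
      linarith
    · apply hglb _ (hadd00 a b ha hb)
      intro i
      rw [map_add]
      have ha' := hle a ha i
      have hb' := hle b hb i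
      linarith
  have psmul : ∀ (c : ℝ) (a : E), 0 < c → 0 ≤ a → p0 (c • a) = c * p0 a := by
    intro c a hc ha
    have hset : (Set.range fun i => (q i : E →ₗ[ℝ] ℝ) (c • a))
        = (fun s => c * s) '' (Set.range fun i => (q i : E →ₗ[ℝ] ℝ) a) := by
      ext r
      constructor
      · rintro ⟨i, rfl⟩
        refine ⟨(q i : E →ₗ[ℝ] ℝ) a, ⟨i, rfl⟩, ?_⟩
        show c * (q i : E →ₗ[ℝ] ℝ) a = (q i : E →ₗ[ℝ] ℝ) (c • a)
        rw [map_smul, smul_eq_mul]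
      · rintro ⟨_, ⟨i, rfl⟩, rfl⟩
        refine ⟨i, ?_⟩
        show (q i : E →ₗ[ℝ] ℝ) (c • a) = c * (q i : E →ₗ[ℝ] ℝ) a
        rw [map_smul, smul_eq_mul]
    show sInf (Set.range fun i => (q i : E →ₗ[ℝ] ℝ) (c • a)) = c * p0 a
    rw [hset]
    exact mySInfMul c hc _ (hne a) (hbdd a ha)
  obtain ⟨L, hL⟩ := extendConeFun myDec hadd00
    (fun c a hc ha => by simpa using smul_le_smul_of_nonneg_left ha hc.le)
    p0 padd psmul
  have h00 : p0 0 = 0 := by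
    have := padd 0 0 le_rfl le_rfl
    simp only [add_zero] at this
    linarith
  have hformula : ∀ w : E, 0 ≤ w → L w = p0 w := by
    intro w hw
    have := hL w 0 hw le_rfl
    rw [sub_zero, h00, sub_zero] at this
    exact this
  have hLpos : ∀ w : E, 0 ≤ w → 0 ≤ L w := by
    intro w hw
    rw [hformula w hw]
    exact p0nonneg w hw
  have hsub0 : ∀ a b : E, a ≤ b → (0 : E) ≤ b - a := fun a b h => by rwa [sub_nonneg]
  have hmem : L ∈ obDual E := by
    show ∀ S : Set E, OrdBdd S → OrdBdd (L '' S)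
    rintro S ⟨a, b, hab⟩
    refine ⟨L a, L b, ?_⟩
    rintro _ ⟨x, hx, rfl⟩
    obtain ⟨h1, h2⟩ := hab x hx
    constructor
    · have h := hLpos _ (hsub0 a x h1); rw [map_sub] at h; linarith
    · have h := hLpos _ (hsub0 x b h2); rw [map_sub] at h; linarith
  refine ⟨⟨L, hmem⟩, ?_, ?_⟩
  · intro w hw
    exact hformula w hw
  · intro i
    rw [obDual_le_iff]
    intro w hw
    show L w ≤ (q i : E →ₗ[ℝ] ℝ) w
    rw [hformula w hw]
    exact hle w hw i

end InfFunctional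

end PerfectAux
/-- if `Q_E : E → E^~~` is a lattice embedding with order dense range, `E` is
`b`-Dedekind complete and every order bounded functional on `E` is order continuous
(`E^~ = E_n^~`), then `E` is perfect: the canonical map `E → (E_n^~)_n^~` is a lattice
isomorphism onto `(E_n^~)_n^~` (a bijection onto `(E_n^~)_n^~` which is an order
isomorphism, hence a lattice isomorphism). -/
theorem perfect_of_bDedekindComplete_of_orderContinuousDual
    {E : Type u} [AddCommGroup E] [Module ℝ E] [Lattice E]
    [CovariantClass E E (· + ·) (· ≤ ·)] [PosSMulMono ℝ E]
    (hemb : QLatticeEmbedding E)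
    (hdense : ∀ φ : Bidual E, 0 < φ → ∃ x : E, 0 < QE E x ∧ QE E x ≤ φ)
    (hbDC : BDedekindComplete E)
    (hEn : ∀ f : ↥(obDual E), f ∈ EnSet.{u, v} E) :
    (∀ x : E, evalN.{u, v} E x ∈ EnBidualSet.{u, v} E) ∧
      Function.Injective (evalN.{u, v} E) ∧
      Set.range (evalN.{u, v} E) = EnBidualSet.{u, v} E ∧
      ∀ x y : E, x ≤ y ↔
        ∀ f : ↥(EnSet.{u, v} E), (0 : ↥(obDual E)) ≤ (f : ↥(obDual E)) →
          evalN.{u, v} E x f ≤ evalN.{u, v} E y f := by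
  classical
  have part1 : ∀ x : E, evalN.{u, v} E x ∈ EnBidualSet.{u, v} E := by
    intro x
    refine ⟨?_, ?_, ?_, ?_⟩
    · -- additivity
      intro f g h hfg
      show ((h : ↥(obDual E)) : E →ₗ[ℝ] ℝ) x = _
      rw [hfg, Submodule.coe_add, LinearMap.add_apply]
      rfl
    · -- homogeneity
      intro c f g hg
      show ((g : ↥(obDual E)) : E →ₗ[ℝ] ℝ) x = _
      rw [hg, Submodule.coe_smul, LinearMap.smul_apply, smul_eq_mul]
      rfl
    · -- order boundedness
      rintro S ⟨a, b, hab⟩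
      refine ⟨((a : ↥(obDual E)) : E →ₗ[ℝ] ℝ) x⁺ - ((b : ↥(obDual E)) : E →ₗ[ℝ] ℝ) x⁻,
              ((b : ↥(obDual E)) : E →ₗ[ℝ] ℝ) x⁺ - ((a : ↥(obDual E)) : E →ₗ[ℝ] ℝ) x⁻, ?_⟩
      rintro _ ⟨f, hf, rfl⟩
      obtain ⟨h1, h2⟩ := hab f hf
      have h1' : (a : ↥(obDual E)) ≤ (f : ↥(obDual E)) := h1
      have h2' : (f : ↥(obDual E)) ≤ (b : ↥(obDual E)) := h2
      have e1 := obDual_le_iff.mp h1' x⁺ (posPart_nonneg x)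
      have e2 := obDual_le_iff.mp h2' x⁺ (posPart_nonneg x)
      have e3 := obDual_le_iff.mp h1' x⁻ (negPart_nonneg x)
      have e4 := obDual_le_iff.mp h2' x⁻ (negPart_nonneg x)
      have edec : ∀ g : ↥(EnSet.{u, v} E), evalN.{u, v} E x g =
          ((g : ↥(obDual E)) : E →ₗ[ℝ] ℝ) x⁺ - ((g : ↥(obDual E)) : E →ₗ[ℝ] ℝ) x⁻ := by
        intro g
        show ((g : ↥(obDual E)) : E →ₗ[ℝ] ℝ) x = _
        rw [← map_sub, posPart_sub_negPart]
      constructor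
      · rw [edec f]; linarith
      · rw [edec f]; linarith
    · -- order continuity
      intro ι _ _ _ qn hqanti hqglb
      constructor
      · rintro _ ⟨i, rfl⟩
        exact abs_nonneg _
      · intro c hc
        set q : ι → ↥(obDual E) := fun i => (qn i : ↥(obDual E)) with hq
        have hpos : ∀ i, 0 ≤ q i := by
          intro i
          have h := hqglb.1 ⟨i, rfl⟩
          exact h
        have hanti : Antitone q := fun i j hij => hqanti hij
        obtain ⟨g, hg1, hg2⟩ := exists_inf_functional q hanti hpos
        have hgEn : (⟨g, hEn g⟩ : ↥(EnSet.{u, v} E)) ∈ lowerBounds (Set.range qn) := by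
          rintro _ ⟨i, rfl⟩
          exact hg2 i
        have hgzero : g ≤ (0 : ↥(obDual E)) := hqglb.2 hgEn
        have hgle : ∀ w : E, 0 ≤ w → (g : E →ₗ[ℝ] ℝ) w ≤ 0 := by
          intro w hw
          have h := obDual_le_iff.mp hgzero w hw
          simpa using h
        set m : E := x⁺ + x⁻ with hm
        have hm0 : (0 : E) ≤ m := by
          have h := myAddLeAdd 0 x⁺ 0 x⁻ (posPart_nonneg x) (negPart_nonneg x)
          simpa using h
        have hcm : c ≤ (g : E →ₗ[ℝ] ℝ) m := by
          rw [hg1 m hm0]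
          apply le_csInf (Set.range_nonempty _)
          rintro _ ⟨i, rfl⟩
          have h1 : c ≤ |evalN.{u, v} E x (qn i)| := hc ⟨i, rfl⟩
          have h2 : |evalN.{u, v} E x (qn i)| ≤ (q i : E →ₗ[ℝ] ℝ) m :=
            posF_abs_le (hpos i) x
          linarith
        linarith [hgle m hm0, hcm]
  have part2 : Function.Injective (evalN.{u, v} E) := by
    intro x y hxy
    apply hemb.1
    apply Subtype.ext
    apply LinearMap.ext
    intro f
    have h := congrFun hxy ⟨f, hEn f⟩
    exact h
  have part3 : Set.range (evalN.{u, v} E) = EnBidualSet.{u, v} E := by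
    apply Set.Subset.antisymm
    · rintro _ ⟨x, rfl⟩
      exact part1 x
    · intro φ hφ
      obtain ⟨h1, h2, h3, -⟩ := hφ
      set Φlin : ↥(obDual E) →ₗ[ℝ] ℝ :=
        { toFun := fun f => φ ⟨f, hEn f⟩,
          map_add' := fun f g => h1 ⟨f, hEn f⟩ ⟨g, hEn g⟩ ⟨f + g, hEn _⟩ rfl,
          map_smul' := by
            intro c f
            simp only [RingHom.id_apply, smul_eq_mul]
            exact h2 c ⟨f, hEn f⟩ ⟨c • f, hEn _⟩ rfl } with hΦlin
      have hΦbdd : ∀ S : Set ↥(obDual E), OrdBdd S → OrdBdd (Φlin '' S) := by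
        rintro S ⟨a, b, hab⟩
        have hS' : OrdBdd ((fun f : ↥(obDual E) =>
            (⟨f, hEn f⟩ : ↥(EnSet.{u, v} E))) '' S) := by
          refine ⟨⟨a, hEn a⟩, ⟨b, hEn b⟩, ?_⟩
          rintro _ ⟨f, hf, rfl⟩
          exact hab f hf
        obtain ⟨lo, hi, hlohi⟩ := h3 _ hS'
        refine ⟨lo, hi, ?_⟩
        rintro _ ⟨f, hf, rfl⟩
        exact hlohi _ ⟨⟨f, hEn f⟩, ⟨f, hf, rfl⟩, rfl⟩
      obtain ⟨x, hx⟩ := exists_QE_eq hemb hdense hbDC ⟨Φlin, hΦbdd⟩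
      refine ⟨x, ?_⟩
      funext f
      have h4 : (QE E x : ↥(obDual E) →ₗ[ℝ] ℝ) = Φlin := congrArg Subtype.val hx
      have h5 := congrFun (congrArg DFunLike.coe h4) (f : ↥(obDual E))
      show ((f : ↥(obDual E)) : E →ₗ[ℝ] ℝ) x = φ f
      have h6 : φ ⟨(f : ↥(obDual E)), hEn _⟩ = φ f := by
        congr 1
      rw [← h6]
      exact h5
  have part4 : ∀ x y : E, x ≤ y ↔
      ∀ f : ↥(EnSet.{u, v} E), (0 : ↥(obDual E)) ≤ (f : ↥(obDual E)) →
        evalN.{u, v} E x f ≤ evalN.{u, v} E y f := by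
    intro x y
    constructor
    · intro hxy f hf
      exact posF_mono hf hxy
    · intro h
      apply (hemb.2.1 x y).mpr
      rw [bidual_le_iff]
      intro f hf
      rw [QE_coe_apply, QE_coe_apply]
      exact h ⟨f, hEn f⟩ hf
  exact ⟨part1, part2, part3, part4⟩
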